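/- Let p = 1 in the framework (R, S convex, Lipschitz, even, nonnegative, positively 1-homogeneous, S(f) = 0 iff f = 0). Let f ∈ ℝ^n, f ≠ 0, set λ = F(f) = R(f)/S(f), and let s ∈ ∂S(f). If u ∈ ℝ^n satisfies R(u) − λ⟨u, s⟩ < 0, then u ≠ 0 and F(u) < F(f). -/

import Mathlib

open Finset

/-- Euclidean inner product on `Fin n → ℝ`. -/
def ip {n : ℕ} (x y : Fin n → ℝ) : ℝ := ∑ i, x i * y i

/-- Subdifferential of a convex function `R : ℝ^n → ℝ` at `x`. -/
def subdiff {n : ℕ} (R : (Fin n → ℝ) → ℝ) (x : Fin n → ℝ) : Set (Fin n → ℝ) :=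
  {r | ∀ y, R x + ip r (y - x) ≤ R y}

/-- `G` is positively `p`-homogeneous: `G (γ • x) = γ^p * G x` for all `γ ≥ 0`. -/
def PosHomog {n : ℕ} (p : ℝ) (G : (Fin n → ℝ) → ℝ) : Prop :=
  ∀ γ : ℝ, 0 ≤ γ → ∀ x, G (γ • x) = γ ^ p * G x

/-- Descent property for the inner problem of the IPM with `p = 1`: if
`R(u) − λ ⟨u, s⟩ < 0` where `λ = R(f)/S(f)` and `s ∈ ∂S(f)`, then `u ≠ 0` and
`F(u) < F(f)`, i.e. `R(u)/S(u) < R(f)/S(f)`. -/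
theorem descent_p_one {n : ℕ} (R S : (Fin n → ℝ) → ℝ)
    (hRconv : ConvexOn ℝ Set.univ R) (hSconv : ConvexOn ℝ Set.univ S)
    (hRlip : ∃ K : NNReal, LipschitzWith K R) (hSlip : ∃ K : NNReal, LipschitzWith K S)
    (hReven : ∀ x, R (-x) = R x) (hSeven : ∀ x, S (-x) = S x)
    (hRnonneg : ∀ x, 0 ≤ R x) (hSnonneg : ∀ x, 0 ≤ S x)
    (hRhom : PosHomog 1 R) (hShom : PosHomog 1 S)
    (hS0 : ∀ g : Fin n → ℝ, S g = 0 ↔ g = 0)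
    (f : Fin n → ℝ) (hf : f ≠ 0) (lam : ℝ) (hlam : lam = R f / S f)
    (s : Fin n → ℝ) (hs : s ∈ subdiff S f)
    (u : Fin n → ℝ) (hu : R u - lam * ip u s < 0) :
    u ≠ 0 ∧ R u / S u < R f / S f := by
  have ip_sub : ∀ a x y : Fin n → ℝ, ip a (x - y) = ip a x - ip a y := by
    intro a x y
    simp [ip, mul_sub, Finset.sum_sub_distrib]
  have ip_comm : ∀ a b : Fin n → ℝ, ip a b = ip b a := by
    intro a b; simp [ip, mul_comm]
  -- S 0 = 0
  have hS0' : S 0 = 0 := by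
    have := hShom 0 le_rfl 0
    simpa [Real.rpow_one, Real.zero_rpow (one_ne_zero)] using this
  -- ip s f = S f
  have h1 : S f ≤ ip s f := by
    have := hs 0
    rw [zero_sub] at this
    have hneg : ip s (-f) = -ip s f := by simp [ip, mul_comm]
    rw [hneg, hS0'] at this
    linarith
  have h2 : ip s f ≤ S f := by
    have := hs ((2 : ℝ) • f)
    have h2f : S ((2 : ℝ) • f) = 2 * S f := by
      have := hShom 2 (by norm_num) f
      simpa [Real.rpow_one] using this
    have hsub : ip s ((2 : ℝ) • f - f) = ip s f := by
      have : (2 : ℝ) • f - f = f := by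
        funext i; simp [Pi.smul_apply]; ring
      rw [this]
    rw [hsub, h2f] at this
    linarith
  have hipsf : ip s f = S f := le_antisymm h2 h1
  -- for all y, ip s y ≤ S y
  have hkey : ∀ y, ip s y ≤ S y := by
    intro y
    have := hs y
    rw [ip_sub, hipsf] at this
    linarith
  have hSf : 0 < S f := by
    rcases lt_or_eq_of_le (hSnonneg f) with h | h
    · exact h
    · exact absurd ((hS0 f).mp h.symm) hf
  have hlamnn : 0 ≤ lam := by
    rw [hlam]; exact div_nonneg (hRnonneg f) (le_of_lt hSf)
  have hprod : 0 < lam * ip u s := lt_of_le_of_lt (hRnonneg u) (by linarith)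
  have hlampos : 0 < lam := by
    rcases lt_or_eq_of_le hlamnn with h | h
    · exact h
    · rw [← h] at hprod; simp at hprod
  have hipu : 0 < ip u s := by
    by_contra h
    push_neg at h
    nlinarith
  have hSu : 0 < S u := lt_of_lt_of_le (by rw [← ip_comm]; exact hipu) (hkey u)
  have hune : u ≠ 0 := fun h => by rw [h] at hSu; rw [hS0'] at hSu; exact lt_irrefl 0 hSu
  refine ⟨hune, ?_⟩
  have hRu : R u < lam * S u := by
    have : lam * ip u s ≤ lam * S u := by
      apply mul_le_mul_of_nonneg_left _ (le_of_lt hlampos)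
      rw [ip_comm]; exact hkey u
    linarith
  rw [← hlam]
  rw [div_lt_iff₀ hSu]
  linarith [hRu]
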